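/- For every integer d ≥ 1 and every (p,u) with p > 0, u ∈ ℝ^d, the entropy variables ω(p,u) are the gradient of the entropy with respect to the conservative variables, expressed in the chain-rule form: the total (Fréchet) derivative of the map (p,u) ↦ η(p,u) at (p,u) equals Σ_{α=1}^{d+1} ω_α(p,u) times the total derivative of the map (p,u) ↦ W_α(p,u) at (p,u). -/

import Mathlib

open Real Finset

/-- Conservative variables `W(p,u)` of the ultra-relativistic Euler equations. -/
noncomputable def consVars (d : ℕ) (p : ℝ) (u : Fin d → ℝ) : Fin (d + 1) → ℝ :=
  Fin.snoc (fun j => 4 * p * u j * Real.sqrt (1 + ∑ i, u i ^ 2))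
    (p * (3 + 4 * ∑ i, u i ^ 2))

/-- Entropy variables (main field) of the ultra-relativistic Euler equations. -/
noncomputable def entropyVars (d : ℕ) (p : ℝ) (u : Fin d → ℝ) : Fin (d + 1) → ℝ :=
  Fin.snoc (fun i => -(1 / 4) * u i * p ^ (-(1 / 4) : ℝ))
    ((1 / 4) * p ^ (-(1 / 4) : ℝ) * Real.sqrt (1 + ∑ j, u j ^ 2))

/-- Entropy `η(p,u) = p^{3/4} √(1+|u|²)`. -/
noncomputable def entropy (d : ℕ) (p : ℝ) (u : Fin d → ℝ) : ℝ :=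
  p ^ ((3 : ℝ) / 4) * Real.sqrt (1 + ∑ j, u j ^ 2)

/-- The entropy variables are the gradient of the entropy with respect to the
conservative variables, in chain-rule form with respect to the primitive
variables `(p,u)`: `D η = Σ_α ω_α D W_α` at every state with `p > 0`. -/
theorem entropyVars_gradient (d : ℕ) (hd : 1 ≤ d)
    (p : ℝ) (hp : 0 < p) (u : Fin d → ℝ) :
    fderiv ℝ (fun x : ℝ × (Fin d → ℝ) => entropy d x.1 x.2) (p, u) =
      ∑ α : Fin (d + 1), entropyVars d p u α •
        fderiv ℝ (fun x : ℝ × (Fin d → ℝ) => consVars d x.1 x.2 α) (p, u) := by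
  classical
  have hSpos : (0:ℝ) < 1 + ∑ i, u i ^ 2 := by positivity
  set q := Real.sqrt (1 + ∑ i, u i ^ 2) with hqdef
  have hq0 : 0 < q := Real.sqrt_pos.mpr hSpos
  have hq2 : q ^ 2 = 1 + ∑ i, u i ^ 2 := Real.sq_sqrt hSpos.le
  set P : (ℝ × (Fin d → ℝ)) →L[ℝ] ℝ := ContinuousLinearMap.fst ℝ ℝ (Fin d → ℝ) with hPdef
  set Q : Fin d → (ℝ × (Fin d → ℝ)) →L[ℝ] ℝ := fun i =>
    (ContinuousLinearMap.proj i).comp (ContinuousLinearMap.snd ℝ ℝ (Fin d → ℝ)) with hQdef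
  have hP' : HasFDerivAt (fun x : ℝ × (Fin d → ℝ) => x.1) P (p, u) := P.hasFDerivAt
  have hQi : ∀ i, HasFDerivAt (fun x : ℝ × (Fin d → ℝ) => x.2 i) (Q i) (p, u) :=
    fun i => (Q i).hasFDerivAt
  set L : (ℝ × (Fin d → ℝ)) →L[ℝ] ℝ := ∑ i, (2 * u i) • Q i with hLdef
  have hs : HasFDerivAt (fun x : ℝ × (Fin d → ℝ) => ∑ i, x.2 i ^ 2) L (p, u) := by
    have h := HasFDerivAt.fun_sum (u := Finset.univ)
      (fun i (_ : i ∈ Finset.univ) => (hQi i).mul (hQi i))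
    simp only [← sq] at h
    have hsum : L = ∑ i, (u i • Q i + u i • Q i) := by
      rw [hLdef]
      exact Finset.sum_congr rfl fun i _ => by rw [two_mul, add_smul]
    rw [hsum]
    exact h
  have hsq : HasFDerivAt (fun x : ℝ × (Fin d → ℝ) => Real.sqrt (1 + ∑ i, x.2 i ^ 2))
      ((1 / (2 * q)) • L) (p, u) := by
    have h1 : HasFDerivAt (fun x : ℝ × (Fin d → ℝ) => 1 + ∑ i, x.2 i ^ 2) L (p, u) :=
      hs.const_add 1
    exact (Real.hasDerivAt_sqrt hSpos.ne').comp_hasFDerivAt (p, u) h1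
  have hrp : HasFDerivAt (fun x : ℝ × (Fin d → ℝ) => x.1 ^ ((3:ℝ)/4))
      ((3/4 * p ^ ((3:ℝ)/4 - 1)) • P) (p, u) :=
    by have h := (Real.hasDerivAt_rpow_const (p := (3:ℝ)/4) (Or.inl hp.ne')).comp_hasFDerivAt (p, u) hP'; exact h
  have hη : HasFDerivAt (fun x : ℝ × (Fin d → ℝ) => entropy d x.1 x.2)
      (p ^ ((3:ℝ)/4) • ((1 / (2 * q)) • L) + q • ((3/4 * p ^ ((3:ℝ)/4 - 1)) • P)) (p, u) := by
    simpa [entropy, ← hqdef] using hrp.fun_mul hsq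
  have hW : ∀ j : Fin d,
      HasFDerivAt (fun x : ℝ × (Fin d → ℝ) => 4 * x.1 * x.2 j * Real.sqrt (1 + ∑ i, x.2 i ^ 2))
        ((4 * p * u j) • ((1 / (2 * q)) • L) + q • ((4 * p) • Q j + u j • ((4:ℝ) • P))) (p, u) := by
    intro j
    exact ((hP'.const_mul 4).mul (hQi j)).mul hsq
  have hWl : HasFDerivAt (fun x : ℝ × (Fin d → ℝ) => x.1 * (3 + 4 * ∑ i, x.2 i ^ 2))
      (p • ((4:ℝ) • L) + (3 + 4 * ∑ i, u i ^ 2) • P) (p, u) :=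
    hP'.mul ((hs.const_mul 4).const_add 3)
  rw [hη.fderiv, Fin.sum_univ_castSucc]
  simp only [entropyVars, consVars, Fin.snoc_castSucc, Fin.snoc_last]
  have e1 : ∀ j : Fin d,
      fderiv ℝ (fun x : ℝ × (Fin d → ℝ) => 4 * x.1 * x.2 j * Real.sqrt (1 + ∑ i, x.2 i ^ 2)) (p, u)
        = (4 * p * u j) • ((1 / (2 * q)) • L) + q • ((4 * p) • Q j + u j • ((4:ℝ) • P)) :=
    fun j => (hW j).fderiv
  have e2 : fderiv ℝ (fun x : ℝ × (Fin d → ℝ) => x.1 * (3 + 4 * ∑ i, x.2 i ^ 2)) (p, u)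
      = p • ((4:ℝ) • L) + (3 + 4 * ∑ i, u i ^ 2) • P := hWl.fderiv
  simp only [e1, e2]
  refine ContinuousLinearMap.ext fun v => ?_
  simp only [ContinuousLinearMap.add_apply, ContinuousLinearMap.smul_apply,
    ContinuousLinearMap.sum_apply, hPdef, hQdef, hLdef, ContinuousLinearMap.coe_fst',
    ContinuousLinearMap.coe_comp', Function.comp_apply, ContinuousLinearMap.coe_snd',
    ContinuousLinearMap.proj_apply, smul_eq_mul, Finset.sum_apply]
  rw [← hqdef]
  set T := ∑ i, u i * v.2 i with hTdef
  have hT : (∑ x, 2 * u x * v.2 x) = 2 * T := by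
    rw [hTdef, Finset.mul_sum]
    exact Finset.sum_congr rfl fun i _ => by ring
  simp only [hT]
  rw [show (∑ x, -(1 / 4) * u x * p ^ (-(1 / 4) : ℝ) *
        (4 * p * u x * (1 / (2 * q) * (2 * T)) + q * (4 * p * v.2 x + u x * (4 * v.1))))
      = ∑ x, ((-(1/4) * p ^ (-(1/4) : ℝ) * (4 * p * (1 / (2 * q) * (2 * T)) + q * 4 * v.1)) * u x ^ 2
          + (-(1/4) * p ^ (-(1/4) : ℝ) * q * 4 * p) * (u x * v.2 x))
      from Finset.sum_congr rfl fun x _ => by ring]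
  rw [Finset.sum_add_distrib, ← Finset.mul_sum, ← Finset.mul_sum, ← hTdef]
  have h34 : p ^ ((3:ℝ) / 4 - 1) = p ^ (-(1/4) : ℝ) := by norm_num
  have hpa : p ^ ((3:ℝ) / 4) = p * p ^ (-(1/4) : ℝ) := by
    rw [show ((3:ℝ)/4) = 1 + (-(1/4)) by norm_num, Real.rpow_add hp, Real.rpow_one]
  have hS' : (∑ i : Fin d, u i ^ 2) = q ^ 2 - 1 := by linarith [hq2]
  rw [h34, hpa, hS']
  field_simp
  ring
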